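/- Fix b > 0, h > 0 and θ ∈ [0, π/2). For a ≥ b let ε(a) = √(1 − b²/a²). Then the lower Rayleigh-conductivity bound LB(a) = π·a·b / ( h/cos²θ + (16b/(3π))·K(ε(a))/K(0) ) tends to +∞ as a → +∞; i.e., as the elliptical opening degenerates into an infinite slit of finite width 2b, the Rayleigh conductivity bounds tend to infinity. -/

import Mathlib

open Real MeasureTheory Filter

noncomputable def Kell (ε : ℝ) : ℝ :=
  ∫ φ in (0:ℝ)..(π/2), (Real.sqrt (1 - ε ^ 2 * Real.sin φ ^ 2))⁻¹


noncomputable def Eell (ε : ℝ) : ℝ :=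
  ∫ φ in (0:ℝ)..(π/2), Real.sqrt (1 - ε ^ 2 * Real.sin φ ^ 2)

noncomputable def Dell (ε : ℝ) : ℝ :=
  ∫ φ in (0:ℝ)..(π/2), Real.sin φ ^ 2 * (Real.sqrt (1 - ε ^ 2 * Real.sin φ ^ 2))⁻¹

lemma kell_nonneg (ε : ℝ) : 0 ≤ Kell ε := by
  apply intervalIntegral.integral_nonneg (by positivity)
  intro x _; positivity

lemma kell_zero : Kell 0 = π / 2 := by
  simp [Kell]

lemma kell_le (c : ℝ) (hc0 : 0 < c) (hc1 : c ≤ 1) (ε : ℝ) (hε : ε ^ 2 ≤ 1 - c ^ 2) :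
    Kell ε ≤ (π ^ 2 / 4 + 1) / Real.sqrt c := by
  set δ := Real.sqrt c with hδdef
  have hδ0 : 0 < δ := Real.sqrt_pos.2 hc0
  have hδ1 : δ ≤ 1 := by
    rw [hδdef, show (1:ℝ) = Real.sqrt 1 by simp]
    exact Real.sqrt_le_sqrt hc1
  have hδsq : δ ^ 2 = c := Real.sq_sqrt hc0.le
  have hπ : (2:ℝ) < π := by linarith [Real.pi_gt_three]
  have hδπ : δ ≤ π / 2 := by linarith
  have hε2 : 0 ≤ ε ^ 2 := sq_nonneg ε
  -- pointwise positivity of the radicand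
  have hpos : ∀ x : ℝ, c ^ 2 ≤ 1 - ε ^ 2 * Real.sin x ^ 2 := by
    intro x
    nlinarith [Real.sin_sq_le_one x, sq_nonneg (Real.sin x)]
  have hc2 : 0 < c ^ 2 := by positivity
  set f : ℝ → ℝ := fun φ => (Real.sqrt (1 - ε ^ 2 * Real.sin φ ^ 2))⁻¹ with hf
  have hcont : Continuous f := by
    apply Continuous.inv₀
    · exact (continuous_const.sub (continuous_const.mul ((Real.continuous_sin).pow 2))).sqrt
    · intro x
      exact ne_of_gt (Real.sqrt_pos.2 (lt_of_lt_of_le hc2 (hpos x)))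
  have hfnn : ∀ x, 0 ≤ f x := fun x => by positivity
  have hint1 : IntervalIntegrable f volume 0 (π/2 - δ) := hcont.intervalIntegrable _ _
  have hint2 : IntervalIntegrable f volume (π/2 - δ) (π/2) := hcont.intervalIntegrable _ _
  have hsplit : Kell ε = (∫ φ in (0:ℝ)..(π/2 - δ), f φ) + ∫ φ in (π/2 - δ)..(π/2), f φ :=
    (intervalIntegral.integral_add_adjacent_intervals hint1 hint2).symm
  have hsinδ : 0 < Real.sin δ := Real.sin_pos_of_pos_of_lt_pi hδ0 (by linarith)
  -- first piece
  have hb1 : (∫ φ in (0:ℝ)..(π/2 - δ), f φ) ≤ (π/2) * (Real.sin δ)⁻¹ := by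
    have := intervalIntegral.norm_integral_le_of_norm_le_const
      (C := (Real.sin δ)⁻¹) (f := f) (a := 0) (b := π/2 - δ) ?_
    · calc (∫ φ in (0:ℝ)..(π/2 - δ), f φ) ≤ ‖∫ φ in (0:ℝ)..(π/2 - δ), f φ‖ := le_abs_self _
        _ ≤ (Real.sin δ)⁻¹ * |π/2 - δ - 0| := this
        _ ≤ (π/2) * (Real.sin δ)⁻¹ := by
            rw [abs_of_nonneg (by linarith)]
            rw [mul_comm]
            gcongr
            linarith
    · intro x hx
      rw [Set.uIoc_of_le (by linarith)] at hx
      have hx0 : 0 < x := hx.1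
      have hx1 : x ≤ π/2 - δ := hx.2
      have hcos : Real.sin δ ≤ Real.cos x := by
        rw [← Real.cos_pi_div_two_sub δ]
        exact Real.cos_le_cos_of_nonneg_of_le_pi hx0.le (by linarith) (by linarith)
      have hcossq : Real.sin δ ^ 2 ≤ 1 - ε ^ 2 * Real.sin x ^ 2 := by
        nlinarith [Real.sin_sq_add_cos_sq x, sq_nonneg (Real.sin x), sq_nonneg ε]
      have hsqrt : Real.sin δ ≤ Real.sqrt (1 - ε ^ 2 * Real.sin x ^ 2) := by
        rw [show Real.sin δ = Real.sqrt (Real.sin δ ^ 2) by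
          rw [Real.sqrt_sq hsinδ.le]]
        exact Real.sqrt_le_sqrt hcossq
      rw [Real.norm_eq_abs, abs_of_nonneg (hfnn x)]
      exact inv_anti₀ hsinδ hsqrt
  -- second piece
  have hb2 : (∫ φ in (π/2 - δ)..(π/2), f φ) ≤ δ * c⁻¹ := by
    have := intervalIntegral.norm_integral_le_of_norm_le_const
      (C := c⁻¹) (f := f) (a := π/2 - δ) (b := π/2) ?_
    · calc (∫ φ in (π/2 - δ)..(π/2), f φ) ≤ ‖∫ φ in (π/2 - δ)..(π/2), f φ‖ := le_abs_self _
        _ ≤ c⁻¹ * |π/2 - (π/2 - δ)| := this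
        _ = δ * c⁻¹ := by rw [abs_of_nonneg (by linarith)]; ring
    · intro x hx
      have hsqrt : c ≤ Real.sqrt (1 - ε ^ 2 * Real.sin x ^ 2) := by
        rw [show c = Real.sqrt (c ^ 2) by rw [Real.sqrt_sq hc0.le]]
        exact Real.sqrt_le_sqrt (hpos x)
      rw [Real.norm_eq_abs, abs_of_nonneg (hfnn x)]
      exact inv_anti₀ hc0 hsqrt
  -- sin δ lower bound
  have hsinlb : 2 / π * δ ≤ Real.sin δ := Real.mul_le_sin hδ0.le hδπ
  have hinv : (Real.sin δ)⁻¹ ≤ π / (2 * δ) := by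
    calc (Real.sin δ)⁻¹ ≤ (2 / π * δ)⁻¹ := inv_anti₀ (by positivity) hsinlb
      _ = π / (2 * δ) := by field_simp
  have key : Kell ε ≤ (π/2) * (π / (2 * δ)) + δ * c⁻¹ := by
    rw [hsplit]
    have : (π/2) * (Real.sin δ)⁻¹ ≤ (π/2) * (π / (2*δ)) := by
      gcongr
    linarith
  calc Kell ε ≤ (π/2) * (π / (2 * δ)) + δ * c⁻¹ := key
    _ = (π ^ 2 / 4 + 1) / δ := by
        rw [← hδsq]
        field_simp
        ring

/-- As the semi-major axis `a` tends to infinity (the opening degenerates into an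
infinite slit of width `2b`), the lower Rayleigh conductivity bound tends to `+∞`. -/
theorem lower_bound_tendsto_atTop
    (b h θ : ℝ) (hb : 0 < b) (hh : 0 < h) (hθ0 : 0 ≤ θ) (hθ1 : θ < π / 2) :
    Tendsto (fun a : ℝ =>
        π * a * b / (h / Real.cos θ ^ 2 +
          (16 * b / (3 * π)) * (Kell (Real.sqrt (1 - b ^ 2 / a ^ 2)) / Kell 0)))
      atTop atTop := by
  have hπ : (0:ℝ) < π := Real.pi_pos
  have hcos : 0 < Real.cos θ := Real.cos_pos_of_mem_Ioo ⟨by linarith, hθ1⟩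
  set D := h / Real.cos θ ^ 2 with hD
  have hD0 : 0 < D := by positivity
  have hsb : 0 < Real.sqrt b := Real.sqrt_pos.2 hb
  set M := (16 * b / (3 * π)) * ((π ^ 2 / 4 + 1) / Real.sqrt b) / (π / 2) with hM
  have hM0 : 0 < M := by positivity
  -- the minorant tends to atTop
  have hsqrt_tendsto : Tendsto Real.sqrt atTop atTop := by
    have h2 := tendsto_rpow_atTop (y := (1:ℝ)/2) (by norm_num)
    refine Tendsto.congr' ?_ h2
    filter_upwards [eventually_ge_atTop (0:ℝ)] with x _
    exact (Real.sqrt_eq_rpow x).symm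
  have hg : Tendsto (fun a : ℝ => (π * b / (D + M)) * Real.sqrt a) atTop atTop :=
    hsqrt_tendsto.const_mul_atTop (by positivity)
  apply tendsto_atTop_mono' atTop ?_ hg
  filter_upwards [eventually_ge_atTop (max b 1)] with a ha
  have hab : b ≤ a := le_trans (le_max_left _ _) ha
  have ha1 : (1:ℝ) ≤ a := le_trans (le_max_right _ _) ha
  have ha0 : 0 < a := by linarith
  have hsa : 0 < Real.sqrt a := Real.sqrt_pos.2 ha0
  have hsa1 : 1 ≤ Real.sqrt a := by
    rw [show (1:ℝ) = Real.sqrt 1 by simp]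
    exact Real.sqrt_le_sqrt ha1
  -- Kell bound
  have hc0 : 0 < b / a := by positivity
  have hc1 : b / a ≤ 1 := (div_le_one ha0).2 hab
  have hrad : (0:ℝ) ≤ 1 - b ^ 2 / a ^ 2 := by
    have : b ^ 2 ≤ a ^ 2 := by nlinarith
    have h2 : b ^ 2 / a ^ 2 ≤ 1 := (div_le_one (by positivity)).2 this
    linarith
  have hε : (Real.sqrt (1 - b ^ 2 / a ^ 2)) ^ 2 ≤ 1 - (b / a) ^ 2 := by
    rw [Real.sq_sqrt hrad, div_pow]
  have hK := kell_le (b / a) hc0 hc1 _ hε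
  have hsqc : Real.sqrt (b / a) = Real.sqrt b / Real.sqrt a := Real.sqrt_div hb.le a
  have hK' : Kell (Real.sqrt (1 - b ^ 2 / a ^ 2)) ≤ (π ^ 2 / 4 + 1) * Real.sqrt a / Real.sqrt b := by
    rw [hsqc] at hK
    calc Kell (Real.sqrt (1 - b ^ 2 / a ^ 2)) ≤ (π ^ 2 / 4 + 1) / (Real.sqrt b / Real.sqrt a) := hK
      _ = (π ^ 2 / 4 + 1) * Real.sqrt a / Real.sqrt b := by field_simp
  set den := D + (16 * b / (3 * π)) * (Kell (Real.sqrt (1 - b ^ 2 / a ^ 2)) / Kell 0) with hden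
  have hKnn := kell_nonneg (Real.sqrt (1 - b ^ 2 / a ^ 2))
  have hden_pos : 0 < den := by
    have : 0 ≤ (16 * b / (3 * π)) * (Kell (Real.sqrt (1 - b ^ 2 / a ^ 2)) / Kell 0) := by
      apply mul_nonneg (by positivity)
      apply div_nonneg hKnn
      rw [kell_zero]; positivity
    rw [hden]; linarith
  have hden_le : den ≤ (D + M) * Real.sqrt a := by
    have h1 : (16 * b / (3 * π)) * (Kell (Real.sqrt (1 - b ^ 2 / a ^ 2)) / Kell 0)
        ≤ M * Real.sqrt a := by
      rw [kell_zero, hM]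
      calc (16 * b / (3 * π)) * (Kell (Real.sqrt (1 - b ^ 2 / a ^ 2)) / (π/2))
          ≤ (16 * b / (3 * π)) * (((π ^ 2 / 4 + 1) * Real.sqrt a / Real.sqrt b) / (π/2)) := by
            gcongr
        _ = 16 * b / (3 * π) * ((π ^ 2 / 4 + 1) / Real.sqrt b) / (π / 2) * Real.sqrt a := by
            ring
    have h2 : D ≤ D * Real.sqrt a := by nlinarith
    calc den = D + (16 * b / (3 * π)) * (Kell (Real.sqrt (1 - b ^ 2 / a ^ 2)) / Kell 0) := hden
      _ ≤ D * Real.sqrt a + M * Real.sqrt a := by linarith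
      _ = (D + M) * Real.sqrt a := by ring
  have key : π * b / (D + M) * Real.sqrt a ≤ π * a * b / den := by
    have heq : π * b / (D + M) * Real.sqrt a = π * a * b / ((D + M) * Real.sqrt a) := by
      rw [eq_div_iff (by positivity)]
      have hss : Real.sqrt a * Real.sqrt a = a := Real.mul_self_sqrt ha0.le
      have hDM : D + M ≠ 0 := by positivity
      calc π * b / (D + M) * Real.sqrt a * ((D + M) * Real.sqrt a)
          = π * b * (Real.sqrt a * Real.sqrt a) * ((D + M) / (D + M)) := by ring
        _ = π * a * b := by rw [hss, div_self hDM]; ring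
    rw [heq]
    exact div_le_div_of_nonneg_left (by positivity) hden_pos hden_le
  exact key
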